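/- arXiv:2007.01341 — 4 statements merged into one kernel-verified Lean document; each statement's English description precedes it below -/
import Mathlib

section
/- Let $a,b:\mathbb{R}\to\mathbb{R}$ be continuous $T$-periodic functions with $a(t)>0$ and $b(t)>0$ for all $t$. Then there exists a unique positive $T$-periodic function $M$ solving the Bernoulli-type equation $M'(t)/M(t) + b(t)M(t) = a(t)$. -/
open intervalIntegral Real

private lemma bernoulli_aux1 (x B C : ℝ) (hx : x ≠ 0) :
    (-(B - C * x) / x ^ 2) / x⁻¹ + B * x⁻¹ = C := by
  field_simp
  ring

private lemma bernoulli_aux2 (x B C D : ℝ) (hx : x ≠ 0)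
    (hD : D = C * x - B * x * x) : B - C * x⁻¹ = -D / x ^ 2 := by
  rw [hD]
  field_simp
  ring

/-- Existence and uniqueness of a positive `T`-periodic solution of the
Bernoulli-type equation `M'/M + b M = a`. -/
theorem bernoulli_periodic_exists_unique
    (T : ℝ) (hT : 0 < T) (a b : ℝ → ℝ)
    (ha : Continuous a) (hb : Continuous b)
    (hpa : Function.Periodic a T) (hpb : Function.Periodic b T)
    (hapos : ∀ t, 0 < a t) (hbpos : ∀ t, 0 < b t) :
    ∃! M : ℝ → ℝ, (∀ t, 0 < M t) ∧ Function.Periodic M T ∧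
      ContDiff ℝ 1 M ∧ ∀ t, deriv M t / M t + b t * M t = a t := by
  have hpa' : ∀ x, a (x + T) = a x := hpa
  have hpb' : ∀ x, b (x + T) = b x := hpb
  -- the antiderivative of `a`
  set A : ℝ → ℝ := fun t => ∫ s in (0:ℝ)..t, a s with hAdef
  have hA_deriv : ∀ t, HasDerivAt A (a t) t := fun t =>
    (ha.integral_hasStrictDerivAt 0 t).hasDerivAt
  have hA_diff : Differentiable ℝ A := fun t => (hA_deriv t).differentiableAt
  have hA_cont : Continuous A := hA_diff.continuous
  have hA0 : A 0 = 0 := intervalIntegral.integral_same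
  have hAadd : ∀ t, A (t + T) = A t + A T := by
    intro t
    have h1 : A (t + T) = A T + ∫ s in T..(t + T), a s := by
      rw [hAdef]
      simp only
      rw [← intervalIntegral.integral_add_adjacent_intervals
        (ha.intervalIntegrable 0 T) (ha.intervalIntegrable T (t + T))]
    have h3 : (∫ x in (0:ℝ)..t, a (x + T)) = ∫ x in (0 + T)..(t + T), a x :=
      integral_comp_add_right a T
    have h2 : (∫ s in T..(t + T), a s) = A t := by
      simp only [hpa', zero_add] at h3
      rw [← h3]
    rw [h1, h2]; ring
  set c : ℝ := A T with hcdef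
  have hc : 0 < c :=
    intervalIntegral.intervalIntegral_pos_of_pos (ha.intervalIntegrable 0 T) hapos hT
  have hec1 : (1:ℝ) < Real.exp c := by
    nlinarith [Real.add_one_le_exp c]
  -- the integrand of the variation-of-constants formula
  set g : ℝ → ℝ := fun s => Real.exp (A s) * b s with hgdef
  have hg_cont : Continuous g := (Real.continuous_exp.comp hA_cont).mul hb
  have hg_pos : ∀ s, 0 < g s := fun s => mul_pos (Real.exp_pos _) (hbpos s)
  set IT : ℝ := ∫ s in (0:ℝ)..T, g s with hITdef
  have hIT : 0 < IT :=
    intervalIntegral.intervalIntegral_pos_of_pos (hg_cont.intervalIntegrable 0 T) hg_pos hT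
  have hecne : Real.exp c - 1 ≠ 0 := by linarith
  obtain ⟨u0, hu0def⟩ : ∃ u0 : ℝ, u0 = IT / (Real.exp c - 1) := ⟨_, rfl⟩
  have hu0 : 0 < u0 := hu0def ▸ div_pos hIT (by linarith)
  set V : ℝ → ℝ := fun t => u0 + ∫ s in (0:ℝ)..t, g s with hVdef
  have hV_deriv : ∀ t, HasDerivAt V (g t) t := fun t =>
    ((hg_cont.integral_hasStrictDerivAt 0 t).hasDerivAt).const_add u0
  set u : ℝ → ℝ := fun t => Real.exp (-A t) * V t with hudef
  have hu_deriv : ∀ t, HasDerivAt u (b t - a t * u t) t := by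
    intro t
    have h1 : HasDerivAt (fun t => Real.exp (-A t)) (Real.exp (-A t) * (-a t)) t :=
      ((hA_deriv t).neg).exp
    have h2 := h1.mul (hV_deriv t)
    convert h2 using 1
    · rfl
    · rfl
    · rfl
    show b t - a t * (Real.exp (-A t) * V t)
      = Real.exp (-A t) * (-a t) * V t + Real.exp (-A t) * (Real.exp (A t) * b t)
    rw [Real.exp_neg]
    field_simp
    ring
  have hu_diff : Differentiable ℝ u := fun t => (hu_deriv t).differentiableAt
  have hu_cont : Continuous u := hu_diff.continuous
  -- periodicity of `u`
  have hVadd : ∀ t, V (t + T) = Real.exp c * V t := by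
    intro t
    have h3 : (∫ x in (0:ℝ)..t, g (x + T)) = ∫ x in (0 + T)..(t + T), g x :=
      integral_comp_add_right g T
    have hgT : ∀ x, g (x + T) = Real.exp c * g x := by
      intro x
      show Real.exp (A (x + T)) * b (x + T) = Real.exp c * (Real.exp (A x) * b x)
      rw [hAadd, hpb', Real.exp_add]
      ring
    have h4 : (∫ x in (0:ℝ)..t, g (x + T)) = Real.exp c * ∫ x in (0:ℝ)..t, g x := by
      simp only [hgT]
      exact intervalIntegral.integral_const_mul _ _
    have h5 : (∫ s in T..(t + T), g s) = Real.exp c * ∫ s in (0:ℝ)..t, g s := by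
      rw [← h4, h3, zero_add]
    have h6 : V (t + T) = u0 + IT + ∫ s in T..(t + T), g s := by
      simp only [hVdef, hITdef]
      rw [← intervalIntegral.integral_add_adjacent_intervals
        (hg_cont.intervalIntegrable 0 T) (hg_cont.intervalIntegrable T (t + T))]
      ring
    have h7' : u0 * (Real.exp c - 1) = IT := by rw [hu0def]; exact div_mul_cancel₀ IT hecne
    have h7 : u0 + IT = Real.exp c * u0 := by linear_combination -h7'
    rw [h6, h5]
    show u0 + IT + Real.exp c * ∫ s in (0:ℝ)..t, g s
      = Real.exp c * (u0 + ∫ s in (0:ℝ)..t, g s)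
    rw [mul_add, ← h7]
  have hu_per : Function.Periodic u T := by
    intro t
    show Real.exp (-A (t + T)) * V (t + T) = Real.exp (-A t) * V t
    rw [hAadd, hVadd, neg_add, Real.exp_add, Real.exp_neg c]
    have := Real.exp_ne_zero c
    field_simp
  -- positivity of `u`
  have hu_pos_nonneg : ∀ t, 0 ≤ t → 0 < u t := by
    intro t ht
    apply mul_pos (Real.exp_pos _)
    have h8 : 0 ≤ ∫ s in (0:ℝ)..t, g s :=
      intervalIntegral.integral_nonneg ht (fun s _ => (hg_pos s).le)
    show 0 < u0 + ∫ s in (0:ℝ)..t, g s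
    linarith
  have hu_pos : ∀ t, 0 < u t := by
    intro t
    obtain ⟨n, hn⟩ := exists_nat_ge ((-t) / T)
    have hnT : -t ≤ n * T := by
      rw [div_le_iff₀ hT] at hn; linarith
    have h0 : 0 ≤ t + n * T := by linarith
    have h9 := (hu_per.nat_mul n) t
    rw [← h9]
    exact hu_pos_nonneg _ h0
  have hu_ne : ∀ t, u t ≠ 0 := fun t => ne_of_gt (hu_pos t)
  -- the solution
  set M : ℝ → ℝ := fun t => (u t)⁻¹ with hMdef
  have hM_pos : ∀ t, 0 < M t := fun t => inv_pos.mpr (hu_pos t)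
  have hM_per : Function.Periodic M T := fun t => by
    show (u (t + T))⁻¹ = (u t)⁻¹
    rw [hu_per t]
  have hM_deriv : ∀ t, HasDerivAt M (-(b t - a t * u t) / (u t) ^ 2) t := fun t =>
    (hu_deriv t).inv (hu_ne t)
  have hM_deriv_eq : ∀ t, deriv M t = -(b t - a t * u t) / (u t) ^ 2 := fun t =>
    (hM_deriv t).deriv
  have hM_cd : ContDiff ℝ 1 M := by
    rw [contDiff_one_iff_deriv]
    constructor
    · exact fun t => (hM_deriv t).differentiableAt
    · have h10 : deriv M = fun t => -(b t - a t * u t) / (u t) ^ 2 := funext hM_deriv_eq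
      rw [h10]
      exact ((hb.sub (ha.mul hu_cont)).neg).div (hu_cont.pow 2)
        (fun t => pow_ne_zero 2 (hu_ne t))
  have hM_eq : ∀ t, deriv M t / M t + b t * M t = a t := by
    intro t
    rw [hM_deriv_eq t]
    exact bernoulli_aux1 (u t) (b t) (a t) (hu_ne t)
  refine ⟨M, ⟨hM_pos, hM_per, hM_cd, hM_eq⟩, ?_⟩
  -- uniqueness
  rintro N ⟨hNpos, hNper, hNcd, hNeq⟩
  have hN_ne : ∀ t, N t ≠ 0 := fun t => ne_of_gt (hNpos t)
  have hN_diff : Differentiable ℝ N := hNcd.differentiable one_ne_zero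
  set v : ℝ → ℝ := fun t => (N t)⁻¹ with hvdef
  have hv_deriv : ∀ t, HasDerivAt v (b t - a t * v t) t := by
    intro t
    have h1 := (hN_diff t).hasDerivAt
    have h2 := h1.inv (hN_ne t)
    convert h2 using 1
    · rfl
    · rfl
    · rfl
    have h3 := hNeq t
    have h4 : deriv N t = a t * N t - b t * N t * N t := by
      have h5 : deriv N t / N t * N t = deriv N t := div_mul_cancel₀ _ (hN_ne t)
      linear_combination (N t) * h3 - h5
    show b t - a t * (N t)⁻¹ = -deriv N t / N t ^ 2
    exact bernoulli_aux2 (N t) (b t) (a t) (deriv N t) (hN_ne t) h4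
  set w : ℝ → ℝ := fun t => Real.exp (A t) * (v t - u t) with hwdef
  have hw_deriv : ∀ t, HasDerivAt w 0 t := by
    intro t
    have h1 : HasDerivAt (fun t => Real.exp (A t)) (Real.exp (A t) * a t) t :=
      (hA_deriv t).exp
    have h2 := h1.mul ((hv_deriv t).sub (hu_deriv t))
    convert h2 using 1
    · rfl
    · rfl
    · rfl
    simp only [Pi.sub_apply]
    ring
  have hw_const : ∀ t, w t = w 0 := fun t =>
    is_const_of_deriv_eq_zero (fun x => (hw_deriv x).differentiableAt)
      (fun x => (hw_deriv x).deriv) t 0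
  have hvT : v T = v 0 := by
    have h := hNper 0
    rw [zero_add] at h
    show (N T)⁻¹ = (N 0)⁻¹
    rw [h]
  have huT : u T = u 0 := by
    have h := hu_per 0
    rwa [zero_add] at h
  have hwT : w T = w 0 := hw_const T
  have hd0 : v 0 - u 0 = 0 := by
    have h1 : w T = Real.exp c * (v 0 - u 0) := by
      show Real.exp (A T) * (v T - u T) = Real.exp c * (v 0 - u 0)
      rw [hvT, huT]
    have h2 : w 0 = v 0 - u 0 := by
      show Real.exp (A 0) * (v 0 - u 0) = v 0 - u 0
      rw [hA0, Real.exp_zero, one_mul]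
    rw [h1, h2] at hwT
    have h9 : (Real.exp c - 1) * (v 0 - u 0) = 0 := by linear_combination hwT
    rcases mul_eq_zero.mp h9 with h' | h'
    · exact absurd h' hecne
    · exact h'
  have hw0 : w 0 = 0 := by
    show Real.exp (A 0) * (v 0 - u 0) = 0
    rw [hd0, mul_zero]
  have hvu : ∀ t, v t = u t := by
    intro t
    have h := hw_const t
    rw [hw0] at h
    have hex := Real.exp_ne_zero (A t)
    have h2 : v t - u t = 0 := by
      rcases mul_eq_zero.mp h with h' | h'
      · exact absurd h' hex
      · exact h'
    linarith
  funext t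
  have h := hvu t
  show N t = (u t)⁻¹
  rw [← h]
  show N t = ((N t)⁻¹)⁻¹
  rw [inv_inv]
end

section
/- With $r,K,M,\tilde K$ as in the IFD construction and assuming $K(x,t) > (K/r)(x,t)\,M'(t)/M(t)$ for all $(x,t)$, the function $\theta^*(x,t)=M(t)\tilde K(x,t)$ is positive and satisfies the fitness-equilibration identity $r(x,t)\left(1-\frac{\theta^*(x,t)}{K(x,t)}\right) = \frac{M'(t)}{M(t)}$ for all $(x,t)$; in particular the fitness $r(1-\theta^*/K)$ is independent of $x$. -/
/-- Under the feasibility condition `K > (K/r) M'/M`, the distribution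
`θ* = M K̃` is positive and equilibrates the fitness:
`r (1 - θ*/K) = M'/M`, which is independent of `x`. -/
theorem theta_star_is_IFD
    {n : ℕ} (T : ℝ) (hT : 0 < T) (r K : (Fin n → ℝ) → ℝ → ℝ)
    (hrpos : ∀ x t, 0 < r x t) (hKpos : ∀ x t, 0 < K x t)
    (hrper : ∀ x, Function.Periodic (r x) T)
    (hKper : ∀ x, Function.Periodic (K x) T)
    (M : ℝ → ℝ) (hMpos : ∀ t, 0 < M t) (hMper : Function.Periodic M T)
    (hM : ContDiff ℝ 1 M)
    (Ktilde : (Fin n → ℝ) → ℝ → ℝ)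
    (hKt : ∀ x t, Ktilde x t = K x t / M t - (K x t / r x t) * (deriv M t / (M t) ^ 2))
    (hcond : ∀ x t, K x t > (K x t / r x t) * (deriv M t / M t)) :
    (∀ x t, 0 < M t * Ktilde x t) ∧
    (∀ x t, r x t * (1 - M t * Ktilde x t / K x t) = deriv M t / M t) := by
  have key : ∀ x t, M t * Ktilde x t
      = K x t - (K x t / r x t) * (deriv M t / M t) := by
    intro x t
    have hM0 := (hMpos t).ne'
    have hr0 := (hrpos x t).ne'
    rw [hKt]
    field_simp
  constructor
  · intro x t
    rw [key]
    linarith [hcond x t]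
  · intro x t
    have hK0 := (hKpos x t).ne'
    have hr0 := (hrpos x t).ne'
    have hM0 := (hMpos t).ne'
    rw [key]
    field_simp
    ring
end

section
/- If $r(x,t)\equiv 1$, then the unique positive $T$-periodic solution $M$ of $\overline{K}/M - \overline{(K/r)}\,M'/M^2 = 1$ satisfies $r(x,t) > M'(t)/M(t)$ automatically, and the corresponding IFD is $\theta^*(x,t) = \frac{M(t)}{\overline K(t)} K(x,t)$, i.e. $\theta^*$ is proportional in space to $K$ for each fixed time. -/
open MeasureTheory

/-- Spatial average of `f(·, t)` over `Ω`. -/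
noncomputable def spAvg {n : ℕ} (Ω : Set (Fin n → ℝ))
    (f : (Fin n → ℝ) → ℝ → ℝ) (t : ℝ) : ℝ :=
  (volume Ω).toReal⁻¹ * ∫ x in Ω, f x t

/-- When `r ≡ 1`, the feasibility condition holds automatically and the IFD
`θ* = M K̃` is proportional in space to `K`: `θ*(x,t) = (M(t)/K̄(t)) K(x,t)`. -/
theorem IFD_r_equals_one
    {n : ℕ} (Ω : Set (Fin n → ℝ)) (hΩ : Bornology.IsBounded Ω)
    (hΩm : MeasurableSet Ω) (hΩ0 : 0 < volume Ω) (hΩfin : volume Ω < ⊤)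
    (T : ℝ) (hT : 0 < T) (K : (Fin n → ℝ) → ℝ → ℝ)
    (hK : Continuous fun p : (Fin n → ℝ) × ℝ => K p.1 p.2)
    (hKpos : ∀ x t, 0 < K x t)
    (hKper : ∀ x, Function.Periodic (K x) T)
    (M : ℝ → ℝ) (hMpos : ∀ t, 0 < M t) (hMper : Function.Periodic M T)
    (hM : ContDiff ℝ 1 M)
    (hBern : ∀ t, spAvg Ω K t / M t -
      spAvg Ω K t * deriv M t / (M t) ^ 2 = 1) :
    (∀ t, deriv M t / M t < 1) ∧
    (∀ x t, M t * (K x t / M t - K x t * (deriv M t / (M t) ^ 2)) =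
      M t / spAvg Ω K t * K x t) := by
  -- First: the spatial average is positive.
  have hA : ∀ t, 0 < spAvg Ω K t := by
    intro t
    have hcont : Continuous fun x => K x t :=
      hK.comp (Continuous.prodMk_left t)
    have hint : IntegrableOn (fun x => K x t) Ω := by
      have hcomp : IsCompact (closure Ω) := hΩ.isCompact_closure
      have : IntegrableOn (fun x => K x t) (closure Ω) :=
        hcont.continuousOn.integrableOn_compact hcomp
      exact this.mono_set subset_closure
    have hpos : 0 < ∫ x in Ω, K x t := by
      rw [setIntegral_pos_iff_support_of_nonneg_ae
        (Filter.Eventually.of_forall fun x => (hKpos x t).le) hint]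
      have : Function.support (fun x => K x t) ∩ Ω = Ω := by
        ext x; simp [Function.support, (hKpos x t).ne']
      rw [this]
      exact hΩ0.trans_le (le_of_eq rfl) |>.trans_le (le_refl _)
    have hvol : 0 < (volume Ω).toReal :=
      ENNReal.toReal_pos hΩ0.ne' hΩfin.ne
    exact mul_pos (inv_pos.mpr hvol) hpos
  constructor
  · intro t
    have hB := hBern t
    have hM0 := hMpos t
    have hA0 := hA t
    set A := spAvg Ω K t
    set m := M t
    set m' := deriv M t
    have key : A * m - A * m' = m ^ 2 := by
      field_simp at hB
      nlinarith [hB]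
    rw [div_lt_one hM0]
    nlinarith [sq_nonneg m]
  · intro x t
    have hB := hBern t
    have hM0 := hMpos t
    have hA0 := hA t
    set A := spAvg Ω K t
    set m := M t
    set m' := deriv M t
    have key : A * m - A * m' = m ^ 2 := by
      field_simp at hB
      nlinarith [hB]
    field_simp
    linear_combination (K x t) * key
end

section
/- Let $\rho:\mathbb{R}\to(0,\infty)$ be continuous, $T$-periodic and non-constant, and let $M$ be the unique positive $T$-periodic solution of $M'(t)/M(t) + M(t) = \rho(t)$. Then $M'(t)/M(t)$ changes sign on $[0,T]$, i.e. there exist $t_1,t_2$ with $M'(t_1)>0$ and $M'(t_2)<0$. -/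
lemma periodic_deriv' (T : ℝ) (M : ℝ → ℝ) (hper : Function.Periodic M T) :
    Function.Periodic (deriv M) T := by
  intro t
  have h1 : (fun x => M (x + T)) = M := funext fun x => hper x
  calc deriv M (t + T) = deriv (fun x => M (x + T)) t := (deriv_comp_add_const M T t).symm
    _ = deriv M t := by rw [h1]

lemma periodic_const_of_deriv_nonpos (T : ℝ) (hT : 0 < T) (M : ℝ → ℝ)
    (hM : Differentiable ℝ M) (hper : Function.Periodic M T)
    (h : ∀ t ∈ Set.Icc 0 T, deriv M t ≤ 0) : ∀ t, M t = M 0 := by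
  have hd : Function.Periodic (deriv M) T := periodic_deriv' T M hper
  have hall : ∀ t, deriv M t ≤ 0 := by
    intro t
    obtain ⟨y, hy, hye⟩ := hd.exists_mem_Ico₀ hT t
    rw [hye]
    exact h y ⟨hy.1, hy.2.le⟩
  have hant : Antitone M := by
    have := antitoneOn_of_deriv_nonpos convex_univ hM.continuous.continuousOn
      (hM.differentiableOn) (fun x _ => hall x)
    intro a b hab
    exact this trivial trivial hab
  have key : ∀ a b : ℝ, a ≤ b → M a = M b := by
    intro a b hab
    refine le_antisymm ?_ (hant hab)
    obtain ⟨n, hn⟩ := exists_nat_ge ((b - a) / T)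
    have hb : b ≤ a + n * T := by
      have := (div_le_iff₀ hT).mp hn
      linarith
    have : M (a + n * T) = M a := hper.nat_mul n a
    rw [← this]
    exact hant hb
  intro t
  rcases le_total t 0 with ht | ht
  · exact (key t 0 ht)
  · exact (key 0 t ht).symm

/-- If `ρ` is positive, continuous, `T`-periodic and non-constant, then the
unique positive `T`-periodic solution `M` of `M'/M + M = ρ` has logarithmic
derivative `M'/M` changing sign on `[0, T]`. -/
theorem log_deriv_changes_sign
    (T : ℝ) (hT : 0 < T) (ρ : ℝ → ℝ)
    (hρ : Continuous ρ) (hρpos : ∀ t, 0 < ρ t)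
    (hρper : Function.Periodic ρ T)
    (hρnc : ∃ s u, ρ s ≠ ρ u)
    (M : ℝ → ℝ) (hMpos : ∀ t, 0 < M t) (hMper : Function.Periodic M T)
    (hM : ContDiff ℝ 1 M)
    (hode : ∀ t, deriv M t / M t + M t = ρ t) :
    ∃ t₁ ∈ Set.Icc (0:ℝ) T, ∃ t₂ ∈ Set.Icc (0:ℝ) T,
      0 < deriv M t₁ / M t₁ ∧ deriv M t₂ / M t₂ < 0 := by
  have hMdiff : Differentiable ℝ M := hM.differentiable one_ne_zero
  by_contra hcon
  push_neg at hcon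
  -- In either case we will show M is constant.
  have hconst : ∀ t, M t = M 0 := by
    by_cases hc : ∃ t₁ ∈ Set.Icc (0:ℝ) T, 0 < deriv M t₁ / M t₁
    · -- then deriv M ≥ 0 on [0,T]
      obtain ⟨t₁, ht₁, hpos⟩ := hc
      have hge : ∀ t ∈ Set.Icc (0:ℝ) T, 0 ≤ deriv M t := by
        intro t ht
        have := hcon t₁ ht₁ t ht hpos
        have hMt := hMpos t
        nlinarith [div_mul_cancel₀ (deriv M t) (ne_of_gt hMt)]
      -- apply to -M
      have hNdiff : Differentiable ℝ (fun t => -M t) := hMdiff.neg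
      have hNper : Function.Periodic (fun t => -M t) T := fun x => by simp [hMper x]
      have hN : ∀ t ∈ Set.Icc (0:ℝ) T, deriv (fun t => -M t) t ≤ 0 := by
        intro t ht
        rw [show (fun t => -M t) = -M from rfl, deriv.neg]
        linarith [hge t ht]
      have := periodic_const_of_deriv_nonpos T hT _ hNdiff hNper hN
      intro t
      have ht := this t
      linarith
    · push_neg at hc
      have hle : ∀ t ∈ Set.Icc (0:ℝ) T, deriv M t ≤ 0 := by
        intro t ht
        have := hc t ht
        have hMt := hMpos t
        nlinarith [div_mul_cancel₀ (deriv M t) (ne_of_gt hMt)]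
      exact periodic_const_of_deriv_nonpos T hT M hMdiff hMper hle
  have hMeq : M = fun _ => M 0 := funext hconst
  have hderiv0 : ∀ t, deriv M t = 0 := by
    intro t
    rw [hMeq]
    simp
  have hρconst : ∀ t, ρ t = M 0 := by
    intro t
    have := hode t
    rw [hderiv0 t, zero_div, zero_add, hconst t] at this
    exact this.symm
  obtain ⟨s, u, hsu⟩ := hρnc
  exact hsu ((hρconst s).trans (hρconst u).symm)
end
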